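/- Suppose g is differentiable. If a mixed stopping strategy p̂ is an equilibrium, then for each x ∈ E the inequalities (I) and (II) hold, and at least one of the following three holds: (I) holds with equality, (II) holds with equality, or the first-order expression f(x) − E_x[φ_p̂(X_1)] + g′(p̂_x h(x) + (1−p̂_x) E_x[ψ_p̂(X_1)]) · (h(x) − E_x[ψ_p̂(X_1)]) equals zero. -/

import Mathlib

/-!
Analytic model of the time-inconsistent stopping framework of Christensen & Lindensjö,
"Time-inconsistent stopping, myopic adjustment & equilibrium stability".

A time-homogeneous Markov chain `X` on a finite state space `E` is encoded by its
transition matrix `P` (`P x y = P_x(X_1 = y)`).  A mixed stopping strategy is a vector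
`p ∈ [0,1]^E`; the associated stopping time is `τ_p = min {n ≥ 0 : Y_n ≤ p_{X_n}}`,
where the `Y_n` are i.i.d. uniform randomization devices.  The quantity
`phi P p f x = E_x[f(X_{τ_p})]` (with the convention `f(X_{τ_p}) := lim_n f(X_n)` on
`{τ_p = ∞}`, the limit existing a.s. by absorption) is realized analytically, via
dominated convergence, as the limit in `n` of the finite-horizon values
`phiSeq P p f n x = E_x[f(X_{τ_p ∧ n})]`, which satisfy the one-step recursion given
by the Markov property.  Likewise `step P v x = E_x[v(X_1)]`.
-/

open Filter

variable {E : Type*}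

/-- One-step expectation operator: `step P v x = E_x[v(X_1)] = ∑ y, P x y * v y`. -/
noncomputable def step [Fintype E] (P : E → E → ℝ) (v : E → ℝ) (x : E) : ℝ :=
  ∑ y, P x y * v y

/-- Finite-horizon value `phiSeq P p f n x = E_x[f(X_{τ_p ∧ n})]`. -/
noncomputable def phiSeq [Fintype E] (P : E → E → ℝ) (p f : E → ℝ) : ℕ → E → ℝ
  | 0 => f
  | n + 1 => fun x => p x * f x + (1 - p x) * step P (phiSeq P p f n) x

/-- `phi P p f x = E_x[f(X_{τ_p})]`, with the convention `f(X_{τ_p}) := lim_n f(X_n)`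
on `{τ_p = ∞}`; by dominated convergence it is the limit of the finite-horizon values. -/
noncomputable def phi [Fintype E] (P : E → E → ℝ) (p f : E → ℝ) (x : E) : ℝ :=
  limUnder atTop fun n => phiSeq P p f n x

/-- `P` is a transition matrix (row-stochastic). -/
def IsTransition [Fintype E] (P : E → E → ℝ) : Prop :=
  (∀ x y, 0 ≤ P x y) ∧ ∀ x, ∑ y, P x y = 1

/-- `a` is an absorbing state of the chain. -/
def IsAbsorbingState (P : E → E → ℝ) (a : E) : Prop := P a a = 1

/-- The chain is absorbing: from each starting state, some absorbing state is reached
with positive probability in a finite number of steps. -/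
def IsAbsorbingChain [Fintype E] [DecidableEq E] (P : E → E → ℝ) : Prop :=
  ∀ x : E, ∃ (a : E) (n : ℕ), IsAbsorbingState P a ∧ 0 < ((Matrix.of P) ^ n) x a

/-- A mixed stopping strategy: a vector in `[0,1]^E`. -/
def IsStrategy (p : E → ℝ) : Prop := ∀ x, p x ∈ Set.Icc (0 : ℝ) 1

/-- `Kval P f h g p x q
      = q f(x) + (1-q) E_x[φ_p(X_1)] + g (q h(x) + (1-q) E_x[ψ_p(X_1)])`. -/
noncomputable def Kval [Fintype E] (P : E → E → ℝ) (f h : E → ℝ) (g : ℝ → ℝ)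
    (p : E → ℝ) (x : E) (q : ℝ) : ℝ :=
  q * f x + (1 - q) * step P (phi P p f) x
    + g (q * h x + (1 - q) * step P (phi P p h) x)

/-- `Jval P f h g p x = φ_p(x) + g(ψ_p(x)) = E_x[f(X_{τ_p})] + g(E_x[h(X_{τ_p})])`. -/
noncomputable def Jval [Fintype E] (P : E → E → ℝ) (f h : E → ℝ) (g : ℝ → ℝ)
    (p : E → ℝ) (x : E) : ℝ :=
  phi P p f x + g (phi P p h x)

/-- Subgame perfect Nash equilibrium (condition (EqI)). -/
def IsEquilibrium [Fintype E] (P : E → E → ℝ) (f h : E → ℝ) (g : ℝ → ℝ)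
    (p : E → ℝ) : Prop :=
  ∀ x : E, ∀ q ∈ Set.Icc (0 : ℝ) 1, Kval P f h g p x q ≤ Jval P f h g p x

section aux
variable [Fintype E] [DecidableEq E] {P : E → E → ℝ}

lemma pow_entry_nonneg (hP : IsTransition P) (n : ℕ) (x y : E) :
    0 ≤ ((Matrix.of P) ^ n) x y := by
  induction n generalizing x y with
  | zero => simp [Matrix.one_apply]; split <;> norm_num
  | succ n ih =>
      rw [pow_succ', Matrix.mul_apply]
      exact Finset.sum_nonneg fun z _ => mul_nonneg (hP.1 x z) (ih z y)

lemma pow_row_sum (hP : IsTransition P) (n : ℕ) (x : E) :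
    ∑ y, ((Matrix.of P) ^ n) x y = 1 := by
  induction n generalizing x with
  | zero => simp [Matrix.one_apply]
  | succ n ih =>
      simp only [pow_succ', Matrix.mul_apply]
      rw [Finset.sum_comm]
      have : ∀ z : E, ∑ y, (Matrix.of P) x z * ((Matrix.of P) ^ n) z y
          = P x z := by
        intro z
        rw [← Finset.mul_sum, ih z]
        simp [Matrix.of_apply]
      simp only [this, hP.2 x]

lemma absorb_off (hP : IsTransition P) {a : E} (ha : P a a = 1) {y : E} (hy : y ≠ a) :
    P a y = 0 := by
  have h1 := hP.2 a
  rw [← Finset.add_sum_erase _ _ (Finset.mem_univ a), ha] at h1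
  have h2 : ∑ z ∈ Finset.univ.erase a, P a z = 0 := by linarith
  have := (Finset.sum_eq_zero_iff_of_nonneg (fun z _ => hP.1 a z)).1 h2
  exact this y (Finset.mem_erase.2 ⟨hy, Finset.mem_univ y⟩)

lemma pow_absorb (hP : IsTransition P) {a : E} (ha : P a a = 1) (n : ℕ) {y : E}
    (hy : y ≠ a) : ((Matrix.of P) ^ n) a y = 0 := by
  induction n generalizing y with
  | zero => simp [Matrix.one_apply, hy.symm]
  | succ n ih =>
      rw [pow_succ', Matrix.mul_apply]
      apply Finset.sum_eq_zero
      intro z _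
      by_cases hz : z = a
      · subst hz; rw [ih hy, mul_zero]
      · have : P a z = 0 := absorb_off hP ha hz
        simp [Matrix.of_apply, this]

lemma pow_absorb_mono (hP : IsTransition P) {a : E} (ha : P a a = 1) (n : ℕ) (x : E) :
    ((Matrix.of P) ^ n) x a ≤ ((Matrix.of P) ^ (n+1)) x a := by
  rw [pow_succ, Matrix.mul_apply]
  have : ((Matrix.of P) ^ n) x a * P a a
      ≤ ∑ z, ((Matrix.of P) ^ n) x z * (Matrix.of P) z a :=
    Finset.single_le_sum (fun z _ => mul_nonneg (pow_entry_nonneg hP n x z) (hP.1 z a))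
      (Finset.mem_univ a)
  rw [ha, mul_one] at this
  exact this

lemma pow_absorb_mono' (hP : IsTransition P) {a : E} (ha : P a a = 1) {n m : ℕ}
    (hnm : n ≤ m) (x : E) : ((Matrix.of P) ^ n) x a ≤ ((Matrix.of P) ^ m) x a := by
  induction m with
  | zero => simp_all
  | succ m ih =>
      rcases Nat.lt_or_ge n (m+1) with hlt | hge
      · exact le_trans (ih (Nat.lt_succ_iff.1 hlt)) (pow_absorb_mono hP ha m x)
      · have : n = m + 1 := le_antisymm hnm hge
        subst this; rfl

end aux

section conv
variable [Fintype E] [DecidableEq E] (P : E → E → ℝ)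

open scoped Classical in
noncomputable def absF : Finset E := Finset.univ.filter fun a => P a a = 1

noncomputable def tval (n : ℕ) (z : E) : ℝ := ∑ y ∈ (absF P)ᶜ, ((Matrix.of P) ^ n) z y

variable {P}

set_option linter.unusedSectionVars false in
lemma mem_absF {a : E} : a ∈ absF P ↔ P a a = 1 := by
  classical simp [absF]

lemma tval_nonneg (hP : IsTransition P) (n : ℕ) (z : E) : 0 ≤ tval P n z :=
  Finset.sum_nonneg fun y _ => pow_entry_nonneg hP n z y

lemma tval_le_one (hP : IsTransition P) (n : ℕ) (z : E) : tval P n z ≤ 1 := by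
  have h : tval P n z ≤ ∑ y, ((Matrix.of P) ^ n) z y :=
    Finset.sum_le_sum_of_subset_of_nonneg (Finset.subset_univ _)
      (fun y _ _ => pow_entry_nonneg hP n z y)
  rw [pow_row_sum hP n z] at h
  exact h

lemma tval_absorb (hP : IsTransition P) (n : ℕ) {z : E} (hz : z ∈ absF P) :
    tval P n z = 0 := by
  apply Finset.sum_eq_zero
  intro y hy
  have hyz : y ≠ z := by
    rintro rfl
    exact (Finset.mem_compl.1 hy) hz
  exact pow_absorb hP (mem_absF.1 hz) n hyz

lemma tval_add (hP : IsTransition P) (m n : ℕ) (z : E) :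
    tval P (m + n) z = ∑ w ∈ (absF P)ᶜ, ((Matrix.of P) ^ m) z w * tval P n w := by
  unfold tval
  simp only [pow_add, Matrix.mul_apply]
  rw [Finset.sum_comm]
  have key : ∀ w : E, ∑ y ∈ (absF P)ᶜ, ((Matrix.of P) ^ m) z w * ((Matrix.of P) ^ n) w y
      = ((Matrix.of P) ^ m) z w * ∑ y ∈ (absF P)ᶜ, ((Matrix.of P) ^ n) w y :=
    fun w => by rw [← Finset.mul_sum]
  simp only [key]
  rw [← Finset.sum_add_sum_compl (absF P)
    (fun w => ((Matrix.of P) ^ m) z w * ∑ y ∈ (absF P)ᶜ, ((Matrix.of P) ^ n) w y)]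
  have hz2 : ∀ w ∈ absF P, ((Matrix.of P) ^ m) z w * ∑ y ∈ (absF P)ᶜ, ((Matrix.of P) ^ n) w y = 0 := by
    intro w hw
    have : (∑ y ∈ (absF P)ᶜ, ((Matrix.of P) ^ n) w y) = tval P n w := rfl
    rw [this, tval_absorb hP n hw, mul_zero]
  rw [Finset.sum_eq_zero hz2, zero_add]

end conv

section conv2
variable [Fintype E] [DecidableEq E] [Nonempty E] {P : E → E → ℝ}

noncomputable def uval (P : E → E → ℝ) [Fintype E] [DecidableEq E] [Nonempty E] (n : ℕ) : ℝ :=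
  Finset.univ.sup' Finset.univ_nonempty (tval P n)

lemma tval_le_uval (n : ℕ) (z : E) : tval P n z ≤ uval P n :=
  Finset.le_sup' _ (Finset.mem_univ z)

lemma uval_nonneg (hP : IsTransition P) (n : ℕ) : 0 ≤ uval P n :=
  le_trans (tval_nonneg hP n (Classical.arbitrary E)) (tval_le_uval n _)

lemma uval_le_one (hP : IsTransition P) (n : ℕ) : uval P n ≤ 1 :=
  Finset.sup'_le _ _ fun z _ => tval_le_one hP n z

lemma uval_submul (hP : IsTransition P) (m n : ℕ) :
    uval P (m + n) ≤ uval P m * uval P n := by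
  apply Finset.sup'_le
  intro z _
  rw [tval_add hP m n z]
  have h1 : ∑ w ∈ (absF P)ᶜ, ((Matrix.of P) ^ m) z w * tval P n w
      ≤ ∑ w ∈ (absF P)ᶜ, ((Matrix.of P) ^ m) z w * uval P n :=
    Finset.sum_le_sum fun w _ =>
      mul_le_mul_of_nonneg_left (tval_le_uval n w) (pow_entry_nonneg hP m z w)
  rw [← Finset.sum_mul] at h1
  calc ∑ w ∈ (absF P)ᶜ, ((Matrix.of P) ^ m) z w * tval P n w
      ≤ tval P m z * uval P n := h1
    _ ≤ uval P m * uval P n :=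
        mul_le_mul_of_nonneg_right (tval_le_uval m z) (uval_nonneg hP n)

lemma uval_antitone (hP : IsTransition P) : Antitone (uval P) := by
  apply antitone_nat_of_succ_le
  intro n
  calc uval P (n + 1) = uval P (1 + n) := by rw [add_comm]
    _ ≤ uval P 1 * uval P n := uval_submul hP 1 n
    _ ≤ 1 * uval P n :=
        mul_le_mul_of_nonneg_right (uval_le_one hP 1) (uval_nonneg hP n)
    _ = uval P n := one_mul _

lemma exists_geom (hP : IsTransition P) (habs : IsAbsorbingChain P) :
    ∃ C ρ : ℝ, 0 < C ∧ 0 ≤ ρ ∧ ρ < 1 ∧ ∀ (n : ℕ) (z : E), tval P n z ≤ C * ρ ^ n := by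
  choose af nf haf hpos using habs
  set m : ℕ := Finset.univ.sup nf + 1 with hm
  have hm1 : 1 ≤ m := Nat.le_add_left 1 _
  have hum : uval P m < 1 := by
    rw [uval]
    rw [Finset.sup'_lt_iff]
    intro z _
    have hmono : ((Matrix.of P) ^ (nf z)) z (af z) ≤ ((Matrix.of P) ^ m) z (af z) :=
      pow_absorb_mono' hP (haf z) (le_trans (Finset.le_sup (Finset.mem_univ z)) (Nat.le_succ _)) z
    have hposm : 0 < ((Matrix.of P) ^ m) z (af z) := lt_of_lt_of_le (hpos z) hmono
    have hsub : (absF P)ᶜ ⊆ Finset.univ.erase (af z) := by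
      intro y hy
      refine Finset.mem_erase.2 ⟨?_, Finset.mem_univ y⟩
      rintro rfl
      exact (Finset.mem_compl.1 hy) (mem_absF.2 (haf z))
    have hle : tval P m z ≤ ∑ y ∈ Finset.univ.erase (af z), ((Matrix.of P) ^ m) z y :=
      Finset.sum_le_sum_of_subset_of_nonneg hsub fun y _ _ => pow_entry_nonneg hP m z y
    have herase : ∑ y ∈ Finset.univ.erase (af z), ((Matrix.of P) ^ m) z y
        = 1 - ((Matrix.of P) ^ m) z (af z) := by
      have := pow_row_sum hP m z
      rw [← Finset.add_sum_erase _ _ (Finset.mem_univ (af z))] at this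
      linarith
    rw [herase] at hle
    linarith
  set r : ℝ := max (uval P m) (1/2) with hr
  have hr0 : (0:ℝ) < r := lt_of_lt_of_le (by norm_num) (le_max_right _ _)
  have hr1 : r < 1 := max_lt hum (by norm_num)
  -- u n ≤ r ^ (n / m)
  have hukm : ∀ k : ℕ, uval P (k * m) ≤ r ^ k := by
    intro k
    induction k with
    | zero => simpa using uval_le_one hP 0
    | succ k ih =>
        have : uval P ((k+1) * m) = uval P (m + k * m) := by ring_nf
        rw [this, pow_succ]
        calc uval P (m + k * m) ≤ uval P m * uval P (k * m) := uval_submul hP m (k*m)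
          _ ≤ r * r ^ k := by
              apply mul_le_mul (le_max_left _ _) ih (uval_nonneg hP _)
              linarith
          _ = r ^ k * r := mul_comm _ _
  have hun : ∀ n : ℕ, uval P n ≤ r ^ (n / m) := by
    intro n
    have h1 : n / m * m ≤ n := Nat.div_mul_le_self n m
    exact le_trans (uval_antitone hP h1) (hukm (n / m))
  set ρ : ℝ := r ^ ((m:ℝ)⁻¹) with hρ
  have hmR : (0:ℝ) < (m:ℝ) := by exact_mod_cast hm1
  have hρ0 : 0 < ρ := Real.rpow_pos_of_pos hr0 _
  have hρ1 : ρ < 1 := Real.rpow_lt_one (le_of_lt hr0) hr1 (by positivity)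
  refine ⟨r⁻¹, ρ, by positivity, le_of_lt hρ0, hρ1, ?_⟩
  intro n z
  have key : r ^ (n / m) ≤ r⁻¹ * ρ ^ n := by
    have e1 : ρ ^ n = r ^ ((m:ℝ)⁻¹ * n) := by
      rw [← Real.rpow_natCast ρ n, hρ, ← Real.rpow_mul (le_of_lt hr0)]
    have e2 : r⁻¹ * ρ ^ n = r ^ ((m:ℝ)⁻¹ * n - 1) := by
      rw [e1, Real.rpow_sub hr0, Real.rpow_one]
      ring
    have e3 : (r : ℝ) ^ (n / m) = r ^ (((n / m : ℕ)):ℝ) := by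
      rw [Real.rpow_natCast]
    rw [e2, e3]
    apply Real.rpow_le_rpow_of_exponent_ge hr0 (le_of_lt hr1)
    -- (m:ℝ)⁻¹ * n - 1 ≤ ↑(n / m)
    have hdm : m * (n / m) + n % m = n := Nat.div_add_mod n m
    have hmod : n % m < m := Nat.mod_lt n (by omega)
    have hcast : (n:ℝ) < (m:ℝ) * ((n / m : ℕ) + 1) := by
      have : (n:ℝ) = (m:ℝ) * ((n / m : ℕ):ℝ) + ((n % m : ℕ):ℝ) := by exact_mod_cast hdm.symm
      rw [this]
      have : ((n % m : ℕ):ℝ) < (m:ℝ) := by exact_mod_cast hmod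
      nlinarith
    have : (m:ℝ)⁻¹ * n < ((n / m : ℕ):ℝ) + 1 := by
      rw [inv_mul_lt_iff₀ hmR]
      linarith [hcast]
    linarith
  calc tval P n z ≤ uval P n := tval_le_uval n z
    _ ≤ r ^ (n / m) := hun n
    _ ≤ r⁻¹ * ρ ^ n := key

end conv2

section conv3
variable [Fintype E] [DecidableEq E] {P : E → E → ℝ} {p f : E → ℝ}

lemma step_absorb (hP : IsTransition P) {z : E} (hz : z ∈ absF P) (v : E → ℝ) :
    step P v z = v z := by
  rw [step]
  rw [Finset.sum_eq_single z]
  · rw [mem_absF.1 hz, one_mul]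
  · intro y _ hy
    rw [absorb_off hP (mem_absF.1 hz) hy, zero_mul]
  · intro hzz
    exact absurd (Finset.mem_univ z) hzz

lemma D0_absorb (hP : IsTransition P) (hp : IsStrategy p) {z : E} (hz : z ∈ absF P) :
    phiSeq P p f 1 z - phiSeq P p f 0 z = 0 := by
  show p z * f z + (1 - p z) * step P (phiSeq P p f 0) z - f z = 0
  rw [step_absorb hP hz]
  show p z * f z + (1 - p z) * f z - f z = 0
  ring

lemma D_rec (n : ℕ) (x : E) :
    phiSeq P p f (n+2) x - phiSeq P p f (n+1) x
      = (1 - p x) * ∑ y, P x y * (phiSeq P p f (n+1) y - phiSeq P p f n y) := by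
  have hs : ∑ y, P x y * (phiSeq P p f (n+1) y - phiSeq P p f n y)
      = step P (phiSeq P p f (n+1)) x - step P (phiSeq P p f n) x := by
    simp [step, mul_sub, Finset.sum_sub_distrib]
  rw [hs]
  show p x * f x + (1 - p x) * step P (phiSeq P p f (n+1)) x
      - (p x * f x + (1 - p x) * step P (phiSeq P p f n) x) = _
  ring

lemma D_bound (hP : IsTransition P) (hp : IsStrategy p) (n : ℕ) (x : E) :
    |phiSeq P p f (n+1) x - phiSeq P p f n x|
      ≤ (∑ z, |phiSeq P p f 1 z - phiSeq P p f 0 z|) * tval P n x := by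
  set M0 : ℝ := ∑ z, |phiSeq P p f 1 z - phiSeq P p f 0 z| with hM0
  have hM0nn : 0 ≤ M0 := Finset.sum_nonneg fun z _ => abs_nonneg _
  induction n generalizing x with
  | zero =>
      by_cases hx : x ∈ absF P
      · rw [D0_absorb hP hp hx, abs_zero]
        exact mul_nonneg hM0nn (tval_nonneg hP 0 x)
      · have ht0 : tval P 0 x = 1 := by
          rw [tval]
          simp only [pow_zero, Matrix.one_apply]
          rw [Finset.sum_ite_eq]
          simp [hx]
        rw [ht0, mul_one, hM0]
        exact Finset.single_le_sum
          (f := fun z => |phiSeq P p f 1 z - phiSeq P p f 0 z|)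
          (fun z _ => abs_nonneg _) (Finset.mem_univ x)
  | succ n ih =>
      rw [D_rec n x, abs_mul]
      have h1 : |1 - p x| ≤ 1 := by
        have := hp x
        rw [Set.mem_Icc] at this
        rw [abs_le]; constructor <;> linarith [this.1, this.2]
      have h2 : |∑ y, P x y * (phiSeq P p f (n+1) y - phiSeq P p f n y)|
          ≤ ∑ y, P x y * (M0 * tval P n y) := by
        refine le_trans (Finset.abs_sum_le_sum_abs _ _) (Finset.sum_le_sum fun y _ => ?_)
        rw [abs_mul, abs_of_nonneg (hP.1 x y)]
        exact mul_le_mul_of_nonneg_left (ih y) (hP.1 x y)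
      have h3 : ∑ y, P x y * (M0 * tval P n y) = M0 * tval P (n+1) x := by
        have hsplit : ∑ y, P x y * (M0 * tval P n y)
            = ∑ y ∈ (absF P)ᶜ, P x y * (M0 * tval P n y) := by
          rw [← Finset.sum_add_sum_compl (absF P) (fun y => P x y * (M0 * tval P n y))]
          rw [Finset.sum_eq_zero, zero_add]
          intro y hy
          rw [tval_absorb hP n hy]
          ring
        rw [hsplit]
        have : tval P (n+1) x = tval P (1+n) x := by rw [add_comm]
        rw [this, tval_add hP 1 n x, Finset.mul_sum]
        apply Finset.sum_congr rfl
        intro y _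
        rw [pow_one]
        show P x y * (M0 * tval P n y) = M0 * (P x y * tval P n y)
        ring
      calc |1 - p x| * |∑ y, P x y * (phiSeq P p f (n+1) y - phiSeq P p f n y)|
          ≤ 1 * (∑ y, P x y * (M0 * tval P n y)) := by
            apply mul_le_mul h1 h2 (abs_nonneg _) zero_le_one
        _ = M0 * tval P (n+1) x := by rw [one_mul, h3]

lemma tendsto_phiSeq (hP : IsTransition P) (habs : IsAbsorbingChain P)
    (hp : IsStrategy p) (x : E) :
    Tendsto (fun n => phiSeq P p f n x) atTop (nhds (phi P p f x)) := by
  haveI : Nonempty E := ⟨x⟩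
  obtain ⟨C, ρ, hC, hρ0, hρ1, hgeom⟩ := exists_geom hP habs
  set M0 : ℝ := ∑ z, |phiSeq P p f 1 z - phiSeq P p f 0 z| with hM0
  have hM0nn : 0 ≤ M0 := Finset.sum_nonneg fun z _ => abs_nonneg _
  have hC : CauchySeq (fun n => phiSeq P p f n x) := by
    apply cauchySeq_of_le_geometric ρ (M0 * C) hρ1
    intro n
    rw [Real.dist_eq, abs_sub_comm]
    calc |phiSeq P p f (n+1) x - phiSeq P p f n x|
        ≤ M0 * tval P n x := D_bound hP hp n x
      _ ≤ M0 * (C * ρ ^ n) := mul_le_mul_of_nonneg_left (hgeom n x) hM0nn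
      _ = M0 * C * ρ ^ n := by ring
  obtain ⟨L, hL⟩ := cauchySeq_tendsto_of_complete hC
  have : phi P p f x = L := hL.limUnder_eq
  rw [phi, this] at *
  exact hL

lemma phi_rec (hP : IsTransition P) (habs : IsAbsorbingChain P) (hp : IsStrategy p)
    (x : E) : phi P p f x = p x * f x + (1 - p x) * step P (phi P p f) x := by
  have h1 : Tendsto (fun n => phiSeq P p f (n+1) x) atTop (nhds (phi P p f x)) :=
    (tendsto_phiSeq hP habs hp x).comp (tendsto_add_atTop_nat 1)
  have h2 : Tendsto (fun n => p x * f x + (1 - p x) * step P (phiSeq P p f n) x) atTop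
      (nhds (p x * f x + (1 - p x) * step P (phi P p f) x)) := by
    apply Tendsto.const_add
    apply Tendsto.const_mul
    unfold step
    exact tendsto_finset_sum _ fun y _ =>
      (tendsto_phiSeq hP habs hp y).const_mul (P x y)
  have heqfun : (fun n => phiSeq P p f (n+1) x)
      = fun n => p x * f x + (1 - p x) * step P (phiSeq P p f n) x := rfl
  rw [heqfun] at h1
  exact tendsto_nhds_unique h1 h2

end conv3

/-- Theorem 4.1, first part: necessary first-order conditions for an equilibrium when
`g` is differentiable: conditions (I) and (II) hold at every state, and at least one of
(I), (II) holds with equality or the first-order expression vanishes. -/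
theorem necessary_conditions_differentiable [Fintype E] [DecidableEq E]
    (P : E → E → ℝ) (hP : IsTransition P) (habs : IsAbsorbingChain P)
    (f h : E → ℝ) (g : ℝ → ℝ) (hg : Differentiable ℝ g)
    (phat : E → ℝ) (hphat : IsStrategy phat)
    (heq : IsEquilibrium P f h g phat) :
    ∀ x : E,
      (f x + g (h x) ≤ phi P phat f x + g (phi P phat h x)) ∧
      (step P (phi P phat f) x + g (step P (phi P phat h) x)
          ≤ phi P phat f x + g (phi P phat h x)) ∧
      (phi P phat f x + g (phi P phat h x) = f x + g (h x) ∨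
        phi P phat f x + g (phi P phat h x)
          = step P (phi P phat f) x + g (step P (phi P phat h) x) ∨
        f x - step P (phi P phat f) x
          + deriv g (phat x * h x + (1 - phat x) * step P (phi P phat h) x)
            * (h x - step P (phi P phat h) x) = 0) := by
  intro x
  have hK1 : Kval P f h g phat x 1 = f x + g (h x) := by simp [Kval]
  have hK0 : Kval P f h g phat x 0
      = step P (phi P phat f) x + g (step P (phi P phat h) x) := by simp [Kval]
  have hJ : Jval P f h g phat x = phi P phat f x + g (phi P phat h x) := rfl
  have hI : f x + g (h x) ≤ phi P phat f x + g (phi P phat h x) := by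
    rw [← hK1, ← hJ]; exact heq x 1 (by norm_num)
  have hII : step P (phi P phat f) x + g (step P (phi P phat h) x)
      ≤ phi P phat f x + g (phi P phat h x) := by
    rw [← hK0, ← hJ]; exact heq x 0 (by norm_num)
  have hJK : phi P phat f x + g (phi P phat h x) = Kval P f h g phat x (phat x) := by
    have rf := phi_rec (f := f) hP habs hphat x
    have rh := phi_rec (f := h) hP habs hphat x
    rw [Kval, rf, rh]
  refine ⟨hI, hII, ?_⟩
  have hpx := hphat x
  rw [Set.mem_Icc] at hpx
  by_cases h1 : phat x = 1
  · left
    rw [hJK, h1, hK1]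
  by_cases h0 : phat x = 0
  · right; left
    rw [hJK, h0, hK0]
  right; right
  have hlt0 : 0 < phat x := lt_of_le_of_ne hpx.1 (Ne.symm h0)
  have hlt1 : phat x < 1 := lt_of_le_of_ne hpx.2 h1
  have hmem : Set.Icc (0:ℝ) 1 ∈ nhds (phat x) := Icc_mem_nhds hlt0 hlt1
  have hmax : IsLocalMax (fun q => Kval P f h g phat x q) (phat x) := by
    filter_upwards [hmem] with q hq
    calc Kval P f h g phat x q ≤ Jval P f h g phat x := heq x q hq
      _ = Kval P f h g phat x (phat x) := by rw [hJ, hJK]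
  set a := step P (phi P phat f) x with ha
  set b := step P (phi P phat h) x with hb
  have hinner : HasDerivAt (fun q : ℝ => q * h x + (1 - q) * b) (h x - b) (phat x) := by
    have h1' : HasDerivAt (fun q : ℝ => q * h x) (h x) (phat x) := by
      simpa using (hasDerivAt_id (phat x)).mul_const (h x)
    have h2' : HasDerivAt (fun q : ℝ => (1 - q) * b) (-1 * b) (phat x) := by
      have : HasDerivAt (fun q : ℝ => 1 - q) (-1) (phat x) := by
        simpa using (hasDerivAt_id (phat x)).const_sub 1
      simpa using this.mul_const b
    have := h1'.add h2'
    exact this.congr_deriv (by ring)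
  have hlin : HasDerivAt (fun q : ℝ => q * f x + (1 - q) * a) (f x - a) (phat x) := by
    have h1' : HasDerivAt (fun q : ℝ => q * f x) (f x) (phat x) := by
      simpa using (hasDerivAt_id (phat x)).mul_const (f x)
    have h2' : HasDerivAt (fun q : ℝ => (1 - q) * a) (-1 * a) (phat x) := by
      have : HasDerivAt (fun q : ℝ => 1 - q) (-1) (phat x) := by
        simpa using (hasDerivAt_id (phat x)).const_sub 1
      simpa using this.mul_const a
    have := h1'.add h2'
    exact this.congr_deriv (by ring)
  have houter : HasDerivAt (fun q : ℝ => g (q * h x + (1 - q) * b))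
      (deriv g (phat x * h x + (1 - phat x) * b) * (h x - b)) (phat x) := by
    have := ((hg (phat x * h x + (1 - phat x) * b)).hasDerivAt).comp (phat x) hinner
    exact this
  have hd : HasDerivAt (fun q => Kval P f h g phat x q)
      (f x - a + deriv g (phat x * h x + (1 - phat x) * b) * (h x - b)) (phat x) := by
    have := hlin.add houter
    exact this
  have hzero := hmax.deriv_eq_zero
  rw [hd.deriv] at hzero
  exact hzero
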